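/- Let ξ-space ℝ^m be partitioned into blocks: m = r₁ + ⋯ + r_k and write ξ = (ξ¹,…,ξᵏ) with ξⁱ ∈ ℝ^{rᵢ}; similarly partition μ ∈ ℝ^m into (μ¹,…,μᵏ). Let M ∈ ℝ^{m×m} be block diagonal with blocks Mⁱ ∈ ℝ^{rᵢ×rᵢ}. Define t_joint(ξ) = ‖M(ξ−μ)‖₂² and t_ind(ξ) = max_{i=1,…,k} ‖Mⁱ(ξⁱ−μⁱ)‖₂². Let ζ₁,…,ζ_n ∈ ℝ^m be data points and let i* ∈ {1,…,n}; set ρ_joint equal to the i*-th smallest value among t_joint(ζ₁),…,t_joint(ζ_n) and ρ_ind equal to the i*-th smallest value among t_ind(ζ₁),…,t_ind(ζ_n). Define U_joint = {ξ : t_joint(ξ) ≤ ρ_joint} and U_ind = {ξ : t_ind(ξ) ≤ ρ_ind}. Let f : ℝ^d → ℝ and, for each i, let C_i ⊆ ℝ^d × ℝ^{rᵢ} be an arbitrary constraint set. Then: (a) ρ_joint ≥ ρ_ind; (b) every x ∈ ℝ^d satisfying '(x, ξⁱ) ∈ C_i for all i and all ξ ∈ U_joint' also satisfies '(x, ξⁱ)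 ∈ C_i for all i and all ξ ∈ U_ind'; and consequently (c) if x_joint minimizes f over the first (joint) feasible set and x_ind minimizes f over the second (individual) feasible set, then f(x_joint) ≥ f(x_ind). -/

import Mathlib

open Matrix

/-- The `r`-th order statistic (1-based) of the finite tuple `v`: the `r`-th smallest value
among `v 0, …, v (n-1)` (junk value `0` if `r` is out of range). -/
noncomputable def orderStat {n : ℕ} (v : Fin n → ℝ) (r : ℕ) : ℝ :=
  if h : r - 1 < n then v (Tuple.sort v ⟨r - 1, h⟩) else 0

lemma orderStat_mono {n : ℕ} (u v : Fin n → ℝ) (huv : ∀ a, u a ≤ v a) (r : ℕ) :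
    orderStat u r ≤ orderStat v r := by
  unfold orderStat
  by_cases h : r - 1 < n
  · simp only [dif_pos h]
    set j : Fin n := ⟨r - 1, h⟩
    set σ := Tuple.sort v
    set τ := Tuple.sort u
    have hA : (Finset.image σ (Finset.Iic j)).card = j.val + 1 := by
      rw [Finset.card_image_of_injective _ σ.injective, Fin.card_Iic]
    have hB : (Finset.image τ (Finset.Iio j)).card = j.val := by
      rw [Finset.card_image_of_injective _ τ.injective, Fin.card_Iio]
    have hex : ∃ a ∈ Finset.image σ (Finset.Iic j), a ∉ Finset.image τ (Finset.Iio j) := by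
      by_contra hcon
      push_neg at hcon
      have := Finset.card_le_card hcon
      omega
    obtain ⟨a, haA, haB⟩ := hex
    obtain ⟨s, hs, rfl⟩ := Finset.mem_image.mp haA
    have h1 : u (τ j) ≤ u (σ s) := by
      have hj : j ≤ τ.symm (σ s) := by
        by_contra hlt
        exact haB (Finset.mem_image.mpr ⟨τ.symm (σ s), Finset.mem_Iio.mpr (lt_of_not_ge hlt),
          τ.apply_symm_apply _⟩)
      have := Tuple.monotone_sort u hj
      simpa [τ] using this
    have h2 : v (σ s) ≤ v (σ j) := Tuple.monotone_sort v (Finset.mem_Iic.mp hs)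
    exact h1.trans ((huv _).trans h2)
  · simp [dif_neg h]

/-- comparing a consolidated (joint) block-diagonal ellipsoid with
individually calibrated per-block ellipsoids, both calibrated by the `i*`-th order
statistic of the same data: (a) `ρ_joint ≥ ρ_ind`; (b) joint-robust feasibility implies
individual-robust feasibility; (c) hence the individual construction has an optimal value
no worse than the joint one. -/
theorem joint_vs_individual_ellipsoids
    {k d n : ℕ} (hk : 0 < k) (hn : 0 < n) (r : Fin k → ℕ)
    (Mi : (i : Fin k) → Matrix (Fin (r i)) (Fin (r i)) ℝ)
    (μ : (i : Fin k) → Fin (r i) → ℝ)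
    (ζ : Fin n → ((i : Fin k) → Fin (r i) → ℝ))
    (istar : ℕ) (histar1 : 1 ≤ istar) (histar2 : istar ≤ n)
    (tjoint tind : ((i : Fin k) → Fin (r i) → ℝ) → ℝ)
    (htjoint : ∀ ξ, tjoint ξ =
      ∑ i, ∑ j, ((Mi i).mulVec (fun j' => ξ i j' - μ i j') j) ^ 2)
    (htind : ∀ ξ, tind ξ =
      ⨆ i, ∑ j, ((Mi i).mulVec (fun j' => ξ i j' - μ i j') j) ^ 2)
    (ρjoint ρind : ℝ)
    (hρjoint : ρjoint = orderStat (fun a => tjoint (ζ a)) istar)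
    (hρind : ρind = orderStat (fun a => tind (ζ a)) istar)
    (f : (Fin d → ℝ) → ℝ)
    (C : (i : Fin k) → Set ((Fin d → ℝ) × (Fin (r i) → ℝ))) :
    ρind ≤ ρjoint ∧
    (∀ x : Fin d → ℝ,
      (∀ ξ, tjoint ξ ≤ ρjoint → ∀ i, (x, ξ i) ∈ C i) →
      (∀ ξ, tind ξ ≤ ρind → ∀ i, (x, ξ i) ∈ C i)) ∧
    (∀ xjoint xind : Fin d → ℝ,
      ((∀ ξ, tjoint ξ ≤ ρjoint → ∀ i, (xjoint, ξ i) ∈ C i) ∧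
        ∀ x : Fin d → ℝ,
          (∀ ξ, tjoint ξ ≤ ρjoint → ∀ i, (x, ξ i) ∈ C i) → f xjoint ≤ f x) →
      ((∀ ξ, tind ξ ≤ ρind → ∀ i, (xind, ξ i) ∈ C i) ∧
        ∀ x : Fin d → ℝ,
          (∀ ξ, tind ξ ≤ ρind → ∀ i, (x, ξ i) ∈ C i) → f xind ≤ f x) →
      f xind ≤ f xjoint) := by
  haveI : Nonempty (Fin k) := ⟨⟨0, hk⟩⟩
  -- block i value is ≤ tind ξ
  have hblock_le : ∀ ξ (i : Fin k),
      (∑ j, ((Mi i).mulVec (fun j' => ξ i j' - μ i j') j) ^ 2) ≤ tind ξ := by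
    intro ξ i
    rw [htind ξ]
    exact le_ciSup (f := fun i : Fin k =>
      ∑ j, ((Mi i).mulVec (fun j' => ξ i j' - μ i j') j) ^ 2)
      (Set.Finite.bddAbove (Set.finite_range _)) i
  -- tind ≤ tjoint
  have hle : ∀ ξ, tind ξ ≤ tjoint ξ := by
    intro ξ
    rw [htind ξ, htjoint ξ]
    apply ciSup_le
    intro i
    exact Finset.single_le_sum (f := fun i : Fin k =>
        ∑ j, ((Mi i).mulVec (fun j' => ξ i j' - μ i j') j) ^ 2)
      (fun i' _ => Finset.sum_nonneg (fun j _ => sq_nonneg _)) (Finset.mem_univ i)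
  have ha : ρind ≤ ρjoint := by
    rw [hρind, hρjoint]
    exact orderStat_mono _ _ (fun a => hle (ζ a)) istar
  have hb : ∀ x : Fin d → ℝ,
      (∀ ξ, tjoint ξ ≤ ρjoint → ∀ i, (x, ξ i) ∈ C i) →
      (∀ ξ, tind ξ ≤ ρind → ∀ i, (x, ξ i) ∈ C i) := by
    intro x hx ξ hξ i
    set ξ' : (i' : Fin k) → Fin (r i') → ℝ := fun i' => if i' = i then ξ i' else μ i' with hξ'
    have hξ'i : ξ' i = ξ i := by simp [hξ']
    have hjval : tjoint ξ' = ∑ j, ((Mi i).mulVec (fun j' => ξ i j' - μ i j') j) ^ 2 := by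
      rw [htjoint ξ']
      rw [Finset.sum_eq_single i]
      · rw [hξ'i]
      · intro i' _ hne
        have h1 : ξ' i' = μ i' := by simp [hξ', hne]
        have h0 : (fun j' => ξ' i' j' - μ i' j') = (0 : Fin (r i') → ℝ) := by
          ext j'; simp [h1]
        rw [h0, Matrix.mulVec_zero]
        simp
      · intro h; exact absurd (Finset.mem_univ i) h
    have : tjoint ξ' ≤ ρjoint := by
      rw [hjval]
      exact le_trans (hblock_le ξ i) (le_trans hξ ha)
    have := hx ξ' this i
    rwa [hξ'i] at this
  refine ⟨ha, hb, ?_⟩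
  intro xjoint xind ⟨hjf, _⟩ ⟨_, hiopt⟩
  exact hiopt xjoint (hb xjoint hjf)
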